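/- For all positive integers r, w, t with r ≥ 2, w ≤ r and t ≥ r + w, it holds that N((r,w),t) ≥ C(r+w−2, r−1) · N((2,1), t−r−w+3) + C(r+w−3, r) + C(r+w−3, r−3), where C(·,·) denotes the binomial coefficient (equal to 0 when the lower index is negative or exceeds the upper index). -/
import Mathlib


/-- `B : Fin t → Finset (Fin n)` is an (r,w;d)-cover-free family: for any disjoint
index sets `L, M` with `|L| = r`, `|M| = w`, the intersection of the blocks in `L`
has at least `d` elements outside the union of the blocks in `M`. -/
def IsCFF (r w d n t : ℕ) (B : Fin t → Finset (Fin n)) : Prop :=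
  ∀ L M : Finset (Fin t), Disjoint L M → L.card = r → M.card = w →
    d ≤ ((L.inf B) \ (M.sup B)).card

/-- `Ncff r w d t` = `N((r,w;d),t)`, the minimum number of points of an
(r,w;d)-CFF with `t` blocks, with the convention that it equals 1 if `r = 0` or `w = 0`. -/
noncomputable def Ncff (r w d t : ℕ) : ℕ :=
  if r = 0 ∨ w = 0 then 1
  else sInf {n : ℕ | ∃ B : Fin t → Finset (Fin n), IsCFF r w d n t B}

lemma transport {α : Type*} [DecidableEq α] (r w t : ℕ) (S : Finset α) (B : Fin t → Finset α)
    (h : ∀ L M : Finset (Fin t), Disjoint L M → L.card = r → M.card = w →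
      ∃ x, x ∈ S ∧ (∀ i ∈ L, x ∈ B i) ∧ ∀ j ∈ M, x ∉ B j) :
    ∃ B' : Fin t → Finset (Fin S.card), IsCFF r w 1 S.card t B' := by
  classical
  set e := S.equivFin with he
  refine ⟨fun i => (S.attach.filter (fun x => x.1 ∈ B i)).image e, ?_⟩
  have hmem : ∀ (x : {y // y ∈ S}) (i : Fin t),
      e x ∈ (S.attach.filter (fun z => z.1 ∈ B i)).image e ↔ (x : α) ∈ B i := by
    intro x i
    simp only [Finset.mem_image, Finset.mem_filter, Finset.mem_attach, true_and]
    constructor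
    · rintro ⟨z, hz, hez⟩
      rwa [e.injective hez] at hz
    · intro hx; exact ⟨x, hx, rfl⟩
  intro L M hLM hL hM
  obtain ⟨x, hxS, hxL, hxM⟩ := h L M hLM hL hM
  rw [Nat.one_le_iff_ne_zero, ← Nat.pos_iff_ne_zero, Finset.card_pos]
  refine ⟨e ⟨x, hxS⟩, ?_⟩
  rw [Finset.mem_sdiff, Finset.mem_inf]
  constructor
  · intro i hi
    exact (hmem ⟨x, hxS⟩ i).2 (hxL i hi)
  · rw [Finset.mem_sup]
    rintro ⟨j, hj, hxj⟩
    exact hxM j hj ((hmem ⟨x, hxS⟩ j).1 hxj)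

lemma cff_exists (r w t : ℕ) (h : r + w ≤ t) :
    ∃ n, ∃ B : Fin t → Finset (Fin n), IsCFF r w 1 n t B := by
  classical
  have key : ∀ L M : Finset (Fin t), Disjoint L M → L.card = r → M.card = w →
      ∃ x, x ∈ (Finset.univ : Finset (Finset (Fin t) × Finset (Fin t))) ∧
        (∀ i ∈ L, x ∈ (fun i => Finset.univ.filter (fun p : Finset (Fin t) × Finset (Fin t) => i ∈ p.1)) i) ∧
        ∀ j ∈ M, x ∉ (fun i => Finset.univ.filter (fun p : Finset (Fin t) × Finset (Fin t) => i ∈ p.1)) j := by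
    intro L M hLM hL hM
    refine ⟨(L, M), Finset.mem_univ _, ?_, ?_⟩
    · intro i hi; simpa using hi
    · intro j hj
      simp only [Finset.mem_filter, Finset.mem_univ, true_and]
      exact fun hjL => (Finset.disjoint_left.1 hLM) hjL hj
  obtain ⟨B', hB'⟩ := transport r w t _ _ key
  exact ⟨_, B', hB'⟩

lemma Ncff_le (r w t n : ℕ) (h : r + w ≤ t) (B : Fin t → Finset (Fin n))
    (hB : IsCFF r w 1 n t B) : Ncff r w 1 t ≤ n := by
  classical
  obtain ⟨L, hLsub, hL⟩ := Finset.exists_subset_card_eq (s := (Finset.univ : Finset (Fin t))) (n := r)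
    (by simpa using le_trans (Nat.le_add_right r w) h)
  have hcard : w ≤ (Finset.univ \ L).card := by
    rw [Finset.card_sdiff_of_subset (Finset.subset_univ L), hL]
    simp only [Finset.card_univ, Fintype.card_fin]
    omega
  obtain ⟨M, hMsub, hM⟩ := Finset.exists_subset_card_eq (s := Finset.univ \ L) (n := w) hcard
  have hdisj : Disjoint L M := by
    rw [Finset.disjoint_right]
    intro a haM
    exact (Finset.mem_sdiff.1 (hMsub haM)).2
  have := hB L M hdisj hL hM
  have hn : 0 < n := by
    rcases Finset.card_pos.1 (lt_of_lt_of_le Nat.zero_lt_one this) with ⟨x, _⟩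
    exact Fin.pos x
  rw [Ncff]
  split
  · exact hn
  · exact Nat.sInf_le ⟨B, hB⟩

lemma Ncff_spec (r w t : ℕ) (hr : r ≠ 0) (hw : w ≠ 0) (h : r + w ≤ t) :
    ∃ B : Fin t → Finset (Fin (Ncff r w 1 t)), IsCFF r w 1 (Ncff r w 1 t) t B := by
  have hne : {n : ℕ | ∃ B : Fin t → Finset (Fin n), IsCFF r w 1 n t B}.Nonempty := by
    obtain ⟨n, B, hB⟩ := cff_exists r w t h
    exact ⟨n, B, hB⟩
  have heq : Ncff r w 1 t = sInf {n : ℕ | ∃ B : Fin t → Finset (Fin n), IsCFF r w 1 n t B} := by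
    rw [Ncff, if_neg (by tauto)]
  rw [heq]
  exact Nat.sInf_mem hne

lemma Ncff_symm_le (r w t : ℕ) (hr : r ≠ 0) (hw : w ≠ 0) (h : r + w ≤ t) :
    Ncff w r 1 t ≤ Ncff r w 1 t := by
  classical
  obtain ⟨B, hB⟩ := Ncff_spec r w t hr hw h
  refine Ncff_le w r t _ (by omega) (fun i => (B i)ᶜ) ?_
  intro L M hLM hL hM
  have key := hB M L hLM.symm hM hL
  obtain ⟨x, hx⟩ := Finset.card_pos.1 (lt_of_lt_of_le one_pos key)
  rw [Finset.mem_sdiff, Finset.mem_inf] at hx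
  rw [Nat.one_le_iff_ne_zero, ← Nat.pos_iff_ne_zero, Finset.card_pos]
  refine ⟨x, ?_⟩
  rw [Finset.mem_sdiff, Finset.mem_inf]
  constructor
  · intro i hi
    rw [Finset.mem_compl]
    intro hxi
    exact hx.2 (Finset.mem_sup.2 ⟨i, hi, hxi⟩)
  · rw [Finset.mem_sup]
    rintro ⟨j, hj, hxj⟩
    exact (Finset.mem_compl.1 hxj) (hx.1 j hj)

lemma rec_ineq (r w t : ℕ) (ht : r + w + 1 ≤ t) :
    Ncff r (w+1) 1 t + Ncff (r+1) w 1 t ≤ Ncff (r+1) (w+1) 1 (t+1) := by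
  classical
  obtain ⟨B, hB⟩ := Ncff_spec (r+1) (w+1) (t+1) (by omega) (by omega) (by omega)
  have hlast_notMem : ∀ (L : Finset (Fin t)), Fin.last t ∉ L.map Fin.castSuccEmb := by
    intro L hmem
    obtain ⟨y, _, hy⟩ := Finset.mem_map.1 hmem
    exact absurd hy (Fin.castSucc_lt_last y).ne
  -- first derived family
  have h1 : ∀ L M : Finset (Fin t), Disjoint L M → L.card = r → M.card = w+1 →
      ∃ x, x ∈ B (Fin.last t) ∧ (∀ i ∈ L, x ∈ B (Fin.castSuccEmb i)) ∧ ∀ j ∈ M, x ∉ B (Fin.castSuccEmb j) := by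
    intro L M hLM hL hM
    have hdisj : Disjoint (insert (Fin.last t) (L.map Fin.castSuccEmb)) (M.map Fin.castSuccEmb) := by
      rw [Finset.disjoint_insert_left]
      exact ⟨hlast_notMem M, (Finset.disjoint_map _).2 hLM⟩
    have key := hB (insert (Fin.last t) (L.map Fin.castSuccEmb)) (M.map Fin.castSuccEmb) hdisj
      (by rw [Finset.card_insert_of_notMem (hlast_notMem L), Finset.card_map, hL])
      (by rw [Finset.card_map, hM])
    obtain ⟨x, hx⟩ := Finset.card_pos.1 (lt_of_lt_of_le one_pos key)
    rw [Finset.mem_sdiff, Finset.mem_inf] at hx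
    refine ⟨x, hx.1 _ (Finset.mem_insert_self _ _), ?_, ?_⟩
    · intro i hi
      exact hx.1 _ (Finset.mem_insert_of_mem (Finset.mem_map_of_mem _ hi))
    · intro j hj hxj
      exact hx.2 (Finset.mem_sup.2 ⟨Fin.castSuccEmb j, Finset.mem_map_of_mem _ hj, hxj⟩)
  obtain ⟨B1, hB1⟩ := transport r (w+1) t (B (Fin.last t)) (fun i => B (Fin.castSuccEmb i)) h1
  have hle1 : Ncff r (w+1) 1 t ≤ (B (Fin.last t)).card := Ncff_le r (w+1) t (B (Fin.last t)).card (by omega) B1 hB1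
  -- second derived family
  have h2 : ∀ L M : Finset (Fin t), Disjoint L M → L.card = r+1 → M.card = w →
      ∃ x, x ∈ (B (Fin.last t))ᶜ ∧ (∀ i ∈ L, x ∈ B (Fin.castSuccEmb i)) ∧ ∀ j ∈ M, x ∉ B (Fin.castSuccEmb j) := by
    intro L M hLM hL hM
    have hdisj : Disjoint (L.map Fin.castSuccEmb) (insert (Fin.last t) (M.map Fin.castSuccEmb)) := by
      rw [Finset.disjoint_insert_right]
      exact ⟨hlast_notMem L, (Finset.disjoint_map _).2 hLM⟩
    have key := hB (L.map Fin.castSuccEmb) (insert (Fin.last t) (M.map Fin.castSuccEmb)) hdisj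
      (by rw [Finset.card_map, hL])
      (by rw [Finset.card_insert_of_notMem (hlast_notMem M), Finset.card_map, hM])
    obtain ⟨x, hx⟩ := Finset.card_pos.1 (lt_of_lt_of_le one_pos key)
    rw [Finset.mem_sdiff, Finset.mem_inf] at hx
    refine ⟨x, ?_, ?_, ?_⟩
    · rw [Finset.mem_compl]
      intro hxS
      exact hx.2 (Finset.mem_sup.2 ⟨Fin.last t, Finset.mem_insert_self _ _, hxS⟩)
    · intro i hi
      exact hx.1 _ (Finset.mem_map_of_mem _ hi)
    · intro j hj hxj
      exact hx.2 (Finset.mem_sup.2 ⟨Fin.castSuccEmb j, Finset.mem_insert_of_mem (Finset.mem_map_of_mem _ hj), hxj⟩)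
  obtain ⟨B2, hB2⟩ := transport (r+1) w t (B (Fin.last t))ᶜ (fun i => B (Fin.castSuccEmb i)) h2
  have hle2 : Ncff (r+1) w 1 t ≤ ((B (Fin.last t))ᶜ).card := Ncff_le (r+1) w t ((B (Fin.last t))ᶜ).card (by omega) B2 hB2
  have hcompl : ((B (Fin.last t))ᶜ).card = Ncff (r+1) (w+1) 1 (t+1) - (B (Fin.last t)).card := by
    rw [Finset.card_compl, Fintype.card_fin]
  have hSle : (B (Fin.last t)).card ≤ Ncff (r+1) (w+1) 1 (t+1) := by
    have := Finset.card_le_univ (B (Fin.last t))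
    simpa using this
  omega

noncomputable def Gaux (A a b : ℕ) : ℕ :=
  (a+b+1).choose (a+1) * A + (a+b).choose (a+2) +
    (if a = 0 then 0 else (a+b).choose (a-1))

lemma choose_symm'' (n k l : ℕ) (h : k + l = n) : n.choose k = n.choose l := by
  rw [← Nat.choose_symm (show k ≤ n by omega)]
  congr 1
  omega

lemma pascal' (n k m j : ℕ) (hn : n = m + 1) (hk : k = j + 1) :
    n.choose k = m.choose j + m.choose (j+1) := by
  subst hn hk
  exact Nat.choose_succ_succ _ _

lemma gA1 (A a : ℕ) : Gaux A a (a+1) ≤ Gaux A a a + Gaux A a a := by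
  rcases a with _ | e
  · simp [Gaux]; omega
  · simp only [Gaux, if_neg (Nat.succ_ne_zero e), Nat.add_sub_cancel]
    have h1 : (e+1+(e+2)+1).choose (e+1+1)
        = (e+1+(e+1)+1).choose (e+1) + (e+1+(e+1)+1).choose (e+1+1) :=
      pascal' _ _ _ _ (by ring) rfl
    have hs1 : (e+1+(e+1)+1).choose (e+1) = (e+1+(e+1)+1).choose (e+1+1) :=
      choose_symm'' _ _ _ (by ring)
    have h3 : (e+1+(e+2)).choose e = (e+1+(e+2)).choose (e+3) :=
      choose_symm'' _ _ _ (by ring)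
    have h4 : (e+1+(e+2)).choose (e+3) = (e+1+(e+1)).choose (e+2) + (e+1+(e+1)).choose (e+2+1) :=
      pascal' _ _ _ _ (by ring) (by ring)
    have h2 : (e+1+(e+2)).choose (e+1+2) = (e+1+(e+1)).choose (e+2) + (e+1+(e+1)).choose (e+2+1) :=
      pascal' _ _ _ _ (by ring) (by ring)
    have h5 : (e+1+(e+1)).choose (e+2) = (e+1+(e+1)).choose e :=
      choose_symm'' _ _ _ (by ring)
    apply le_of_eq
    rw [h1, hs1, h2, h3, h4, h5]
    ring

lemma gA2 (A c : ℕ) : Gaux A (c+1) 0 ≤ Gaux A c 0 + 1 := by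
  rcases c with _ | e
  · simp [Gaux]
    decide
  · simp only [Gaux, if_neg (Nat.succ_ne_zero _), Nat.add_sub_cancel, Nat.add_zero]
    have c1 : (e+2+1).choose (e+1+1+1) = 1 := by
      have h : e+1+1+1 = e+2+1 := by omega
      rw [h, Nat.choose_self]
    have c2 : (e+2).choose (e+1+1+2) = 0 := Nat.choose_eq_zero_of_lt (by omega)
    have c3 : (e+2).choose (e+1) = e+2 := by
      have h : e+2 = (e+1)+1 := by omega
      rw [h, Nat.choose_succ_self_right]
    have c4 : (e+1+1).choose (e+1+1) = 1 := Nat.choose_self _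
    have c5 : (e+1).choose (e+1+2) = 0 := Nat.choose_eq_zero_of_lt (by omega)
    have c6 : (e+1).choose e = e+1 := Nat.choose_succ_self_right e
    rw [c1, c2, c3, c4, c5, c6]
    omega

lemma gA3 (A c d : ℕ) : Gaux A (c+1) (d+1) ≤ Gaux A c (d+1) + Gaux A (c+1) d := by
  have h1 : (c+1+(d+1)+1).choose (c+1+1)
      = (c+(d+1)+1).choose (c+1) + (c+(d+1)+1).choose (c+1+1) :=
    pascal' _ _ _ _ (by ring) rfl
  have h2 : (c+1+(d+1)).choose (c+1+2) = (c+(d+1)).choose (c+2) + (c+(d+1)).choose (c+2+1) :=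
    pascal' _ _ _ _ (by ring) (by ring)
  have he1 : (c+(d+1)+1) = (c+1+d+1) := by ring
  have he2 : (c+(d+1)) = (c+1+d) := by ring
  rcases c with _ | e
  · simp only [Gaux, if_neg (Nat.succ_ne_zero _), if_pos rfl, Nat.add_sub_cancel]
    have h8 : (0+1+(d+1)).choose 0 = 1 := Nat.choose_zero_right _
    have h9 : (0+1+d+1).choose (0+1) = (0+1+d+1).choose 1 := rfl
    apply le_of_eq
    rw [h1, h2, he1, he2, h8]
    have h10 : (0+1+d).choose (0+1-1) = (0+1+d).choose 0 := rfl
    rw [h10, Nat.choose_zero_right]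
    simp
    ring
  · simp only [Gaux, if_neg (Nat.succ_ne_zero _), Nat.add_sub_cancel]
    have h3 : (e+1+1+(d+1)).choose (e+1) = (e+1+1+d).choose e + (e+1+1+d).choose (e+1) :=
      pascal' _ _ _ _ (by ring) rfl
    apply le_of_eq
    rw [h1, h2, h3, he1, he2]
    have he3 : (e+1+1+d) = (e+1+(d+1)) := by ring
    rw [he3]
    ring

lemma Ncff_w0 (r t : ℕ) : Ncff r 0 1 t = 1 := by
  rw [Ncff, if_pos (Or.inr rfl)]

lemma main_aux : ∀ n a b s : ℕ, a + b = n → b ≤ a + 1 →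
    Gaux (Ncff 2 1 1 (s+3)) a b ≤ Ncff (a+2) (b+1) 1 (a+b+3+s) := by
  intro n
  induction n using Nat.strong_induction_on with
  | _ n IH =>
    intro a b s hab hba
    by_cases hb : b = a + 1
    · subst hb
      have hrec := rec_ineq (a+1) (a+1) (a+a+3+s) (by omega)
      have hsym := Ncff_symm_le (a+1) (a+2) (a+a+3+s) (by omega) (by omega) (by omega)
      have hIH : Gaux (Ncff 2 1 1 (s+3)) a a ≤ Ncff (a+2) (a+1) 1 (a+a+3+s) :=
        IH (a+a) (by omega) a a s rfl (by omega)
      have hg := gA1 (Ncff 2 1 1 (s+3)) a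
      have ht : a+(a+1)+3+s = (a+a+3+s)+1 := by omega
      rw [ht]
      calc Gaux (Ncff 2 1 1 (s+3)) a (a+1)
          ≤ Gaux (Ncff 2 1 1 (s+3)) a a + Gaux (Ncff 2 1 1 (s+3)) a a := hg
        _ ≤ Ncff (a+2) (a+1) 1 (a+a+3+s) + Ncff (a+2) (a+1) 1 (a+a+3+s) :=
            Nat.add_le_add hIH hIH
        _ ≤ Ncff (a+1) (a+2) 1 (a+a+3+s) + Ncff (a+2) (a+1) 1 (a+a+3+s) :=
            Nat.add_le_add_right hsym _
        _ ≤ _ := hrec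
    · have hba' : b ≤ a := by omega
      rcases a with _ | c
      · have hb0 : b = 0 := by omega
        subst hb0
        have he : (0:ℕ)+0+3+s = s+3 := by omega
        rw [he]
        simp [Gaux]
      · have hrec := rec_ineq (c+2) b (c+b+3+s) (by omega)
        have hIH1 : Gaux (Ncff 2 1 1 (s+3)) c b ≤ Ncff (c+2) (b+1) 1 (c+b+3+s) :=
          IH (c+b) (by omega) c b s rfl (by omega)
        have ht : c+1+b+3+s = (c+b+3+s)+1 := by omega
        rw [ht]
        rcases b with _ | d
        · have h2 : Ncff (c+3) 0 1 (c+0+3+s) = 1 := Ncff_w0 _ _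
          calc Gaux (Ncff 2 1 1 (s+3)) (c+1) 0
              ≤ Gaux (Ncff 2 1 1 (s+3)) c 0 + 1 := gA2 _ _
            _ ≤ Ncff (c+2) (0+1) 1 (c+0+3+s) + Ncff (c+3) 0 1 (c+0+3+s) := by
                rw [h2]; exact Nat.add_le_add_right hIH1 1
            _ ≤ _ := hrec
        · have hIH2 : Gaux (Ncff 2 1 1 (s+3)) (c+1) d ≤ Ncff (c+3) (d+1) 1 ((c+1)+d+3+s) :=
            IH ((c+1)+d) (by omega) (c+1) d s rfl (by omega)
          have he2 : (c+1)+d+3+s = c+(d+1)+3+s := by omega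
          rw [he2] at hIH2
          calc Gaux (Ncff 2 1 1 (s+3)) (c+1) (d+1)
              ≤ Gaux (Ncff 2 1 1 (s+3)) c (d+1) + Gaux (Ncff 2 1 1 (s+3)) (c+1) d := gA3 _ _ _
            _ ≤ Ncff (c+2) (d+1+1) 1 (c+(d+1)+3+s) + Ncff (c+3) (d+1) 1 (c+(d+1)+3+s) :=
                Nat.add_le_add hIH1 hIH2
            _ ≤ _ := hrec

/-- For positive integers `r, w, t` with `r ≥ 2`, `w ≤ r` and `t ≥ r + w`,
`N((r,w),t) ≥ C(r+w−2, r−1)·N((2,1), t−r−w+3) + C(r+w−3, r) + C(r+w−3, r−3)`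
(the last binomial coefficient being 0 when `r < 3`). -/
theorem cff_ge_21_bound (r w t : ℕ) (hr : 2 ≤ r) (hw : 0 < w) (hwr : w ≤ r)
    (ht : r + w ≤ t) :
    (r + w - 2).choose (r - 1) * Ncff 2 1 1 (t - r - w + 3)
        + (r + w - 3).choose r
        + (if 3 ≤ r then (r + w - 3).choose (r - 3) else 0)
      ≤ Ncff r w 1 t := by
  obtain ⟨a, rfl⟩ : ∃ a, r = a + 2 := ⟨r - 2, by omega⟩
  obtain ⟨b, rfl⟩ : ∃ b, w = b + 1 := ⟨w - 1, by omega⟩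
  obtain ⟨s, rfl⟩ : ∃ s, t = a + b + 3 + s := ⟨t - (a + b + 3), by omega⟩
  have key := main_aux (a+b) a b s rfl (by omega)
  have e1 : a+2+(b+1)-2 = a+b+1 := by omega
  have e2 : a+2-1 = a+1 := by omega
  have e3 : a+b+3+s-(a+2)-(b+1)+3 = s+3 := by omega
  have e4 : a+2+(b+1)-3 = a+b := by omega
  rw [e1, e2, e3, e4]
  rcases a with _ | c
  · rw [if_neg (by omega)]
    simpa [Gaux] using key
  · rw [if_pos (by omega)]
    have e5 : c+1+2-3 = c := by omega
    rw [e5]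
    simpa [Gaux] using key
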